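/- Let v : Fin n → ℝ² be a closed polygon (indices mod n) with edge vectors e_k = v_{k+1} − v_k, edge midpoints m_k = (v_k + v_{k+1})/2, scaled normals rot(e_k) where rot(x, y) = (y, −x), and shoelace signed area A ≠ 0. If φ : ℝ² → ℝ is affine, φ(x) = c + ⟪g, x⟫, so that its exact face-normal derivative on edge k multiplied by the edge length equals ⟪g, rot(e_k)⟫, then the Modified Green-Gauss reconstruction is exact: for any point p ∈ ℝ², (1/A) ∑_k ⟪g, rot(e_k)⟫ • (m_k − p) = g. -/

import Mathlib

open scoped RealInnerProductSpace BigOperators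

/-- The clockwise quarter-turn `rot (x, y) = (y, -x)` in the plane. -/
noncomputable def rot (w : EuclideanSpace ℝ (Fin 2)) : EuclideanSpace ℝ (Fin 2) :=
  (WithLp.equiv 2 (Fin 2 → ℝ)).symm ![w 1, -(w 0)]

private lemma shift_sum {n : ℕ} [NeZero n] (u : Fin n → ℝ) :
    ∑ k : Fin n, u (k + 1) = ∑ k : Fin n, u k :=
  Fintype.sum_equiv (Equiv.addRight 1) _ _ (fun _ => rfl)


/-- For a closed polygon `v : Fin n → ℝ²` (indices mod `n`) with edge vectors
`e k = v (k+1) - v k`, edge midpoints `m k = (v k + v (k+1))/2`, scaled outward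
normals `rot (e k)` and nonzero shoelace signed area `A`, the Modified Green-Gauss
reconstruction is exact for an affine field with gradient `g` (whose exact
face-normal derivative times edge length on edge `k` is `⟪g, rot (e k)⟫`):
for any point `p`, `(1/A) ∑ k ⟪g, rot (e k)⟫ • (m k - p) = g`. -/
theorem mgg_exact_for_affine (n : ℕ) [NeZero n]
    (v : Fin n → EuclideanSpace ℝ (Fin 2))
    (A : ℝ)
    (hA : A = (1 / 2 : ℝ) * ∑ k : Fin n,
        (v k 0 * v (k + 1) 1 - v (k + 1) 0 * v k 1))
    (hA0 : A ≠ 0)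
    (φ : EuclideanSpace ℝ (Fin 2) → ℝ) (c : ℝ) (g : EuclideanSpace ℝ (Fin 2))
    (hφ : ∀ x, φ x = c + ⟪g, x⟫)
    (p : EuclideanSpace ℝ (Fin 2)) :
    A⁻¹ • ∑ k : Fin n,
        ⟪g, rot (v (k + 1) - v k)⟫ • (((2 : ℝ)⁻¹ • (v k + v (k + 1))) - p)
      = g := by
  have hinner : ∀ k : Fin n, ⟪g, rot (v (k + 1) - v k)⟫ =
      g 0 * (v (k + 1) 1 - v k 1) - g 1 * (v (k + 1) 0 - v k 0) := by
    intro k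
    simp [rot, PiLp.inner_apply, Fin.sum_univ_two, WithLp.equiv_symm_apply, PiLp.toLp_apply,
      PiLp.sub_apply]
    ring
  have H0 : ∑ k : Fin n, v (k + 1) 0 = ∑ k : Fin n, v k 0 := shift_sum (fun k => v k 0)
  have H1 : ∑ k : Fin n, v (k + 1) 1 = ∑ k : Fin n, v k 1 := shift_sum (fun k => v k 1)
  have H00 : ∑ k : Fin n, v (k + 1) 0 * v (k + 1) 0 = ∑ k : Fin n, v k 0 * v k 0 :=
    shift_sum (fun k => v k 0 * v k 0)
  have H11 : ∑ k : Fin n, v (k + 1) 1 * v (k + 1) 1 = ∑ k : Fin n, v k 1 * v k 1 :=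
    shift_sum (fun k => v k 1 * v k 1)
  have H01 : ∑ k : Fin n, v (k + 1) 0 * v (k + 1) 1 = ∑ k : Fin n, v k 0 * v k 1 :=
    shift_sum (fun k => v k 0 * v k 1)
  have hA' : (∑ k : Fin n, v k 0 * v (k + 1) 1) - ∑ k : Fin n, v (k + 1) 0 * v k 1
      = 2 * A := by
    rw [hA, Finset.sum_sub_distrib]; ring
  have key : (∑ k : Fin n,
        ⟪g, rot (v (k + 1) - v k)⟫ • (((2 : ℝ)⁻¹ • (v k + v (k + 1))) - p))
      = A • g := by
    ext i
    rw [WithLp.ofLp_sum, Finset.sum_apply]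
    simp only [PiLp.smul_apply, PiLp.sub_apply, PiLp.add_apply, smul_eq_mul]
    fin_cases i
    · calc ∑ k : Fin n, ⟪g, rot (v (k + 1) - v k)⟫ *
            (2⁻¹ * (v k 0 + v (k + 1) 0) - p 0)
          = ∑ k : Fin n,
            ((g 0 * 2⁻¹) * (v k 0 * v (k + 1) 1)
              + (g 0 * 2⁻¹) * (v (k + 1) 0 * v (k + 1) 1)
              - (g 0 * 2⁻¹) * (v k 0 * v k 1)
              - (g 0 * 2⁻¹) * (v (k + 1) 0 * v k 1)
              - (g 1 * 2⁻¹) * (v (k + 1) 0 * v (k + 1) 0)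
              + (g 1 * 2⁻¹) * (v k 0 * v k 0)
              - (g 0 * p 0) * v (k + 1) 1 + (g 0 * p 0) * v k 1
              + (g 1 * p 0) * v (k + 1) 0 - (g 1 * p 0) * v k 0) := by
            refine Finset.sum_congr rfl fun k _ => ?_
            rw [hinner k]; ring
        _ = A * g 0 := by
            simp only [Finset.sum_add_distrib, Finset.sum_sub_distrib,
              ← Finset.mul_sum]
            rw [H0, H1, H00, H01]
            linear_combination (g 0 / 2) * hA'
    · calc ∑ k : Fin n, ⟪g, rot (v (k + 1) - v k)⟫ *
            (2⁻¹ * (v k 1 + v (k + 1) 1) - p 1)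
          = ∑ k : Fin n,
            ((g 0 * 2⁻¹) * (v (k + 1) 1 * v (k + 1) 1)
              - (g 0 * 2⁻¹) * (v k 1 * v k 1)
              - (g 1 * 2⁻¹) * (v (k + 1) 0 * v k 1)
              - (g 1 * 2⁻¹) * (v (k + 1) 0 * v (k + 1) 1)
              + (g 1 * 2⁻¹) * (v k 0 * v k 1)
              + (g 1 * 2⁻¹) * (v k 0 * v (k + 1) 1)
              - (g 0 * p 1) * v (k + 1) 1 + (g 0 * p 1) * v k 1
              + (g 1 * p 1) * v (k + 1) 0 - (g 1 * p 1) * v k 0) := by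
            refine Finset.sum_congr rfl fun k _ => ?_
            rw [hinner k]; ring
        _ = A * g 1 := by
            simp only [Finset.sum_add_distrib, Finset.sum_sub_distrib,
              ← Finset.mul_sum]
            rw [H0, H1, H11, H01]
            linear_combination (g 1 / 2) * hA'
  rw [key, smul_smul, inv_mul_cancel₀ hA0, one_smul]
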